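/- Two crossed products R^{α₁}_{η₁}G and R^{α₂}_{η₂}G are graded isomorphic if and only if there exist λ : G → R* and φ ∈ Aut_F(R) such that η₂(g) = ι_{λ(g)} ∘ φ ∘ η₁(g) ∘ φ⁻¹ and α₂(g,h) = λ(g)·φ(η₁(g)(φ⁻¹(λ(h))))·φ(α₁(g,h))·λ(gh)⁻¹ for all g,h ∈ G. -/

import Mathlib

/-- A pair `(α, η)` is compatible (defines a crossed product `R^α_η G`) if
`α(g₁,g₂)α(g₁g₂,g₃) = η(g₁)(α(g₂,g₃))α(g₁,g₂g₃)` and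
`η(g₁)∘η(g₂) = ι_{α(g₁,g₂)} ∘ η(g₁g₂)`. -/
def Compatible (F : Type*) {R G : Type*} [Field F] [Ring R] [Algebra F R] [Group G]
    (α : G → G → Rˣ) (η : G → R ≃ₐ[F] R) : Prop :=
  (∀ g₁ g₂ g₃ : G,
      (α g₁ g₂ : R) * (α (g₁ * g₂) g₃ : R) = η g₁ (α g₂ g₃) * (α g₁ (g₂ * g₃) : R)) ∧
  (∀ (g₁ g₂ : G) (r : R),
      η g₁ (η g₂ r) = (α g₁ g₂ : R) * η (g₁ * g₂) r * ((α g₁ g₂)⁻¹ : Rˣ))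

/-- The multiplication of the crossed product `R^α_η G`, realized on the free `R`-module
`G →₀ R` with basis `{u_g}`: `(r u_x)(s u_y) = r η(x)(s) α(x,y) u_{xy}`, where
`Finsupp.single g r` represents the element `r u_g`. -/
noncomputable def mulCP (F : Type*) {R G : Type*} [Field F] [Ring R] [Algebra F R] [Group G]
    (α : G → G → Rˣ) (η : G → R ≃ₐ[F] R) (a b : G →₀ R) : G →₀ R :=
  a.sum fun x r => b.sum fun y s => Finsupp.single (x * y) (r * η x s * (α x y : R))

set_option linter.unusedSectionVars false

section Aux
variable {F R G : Type*} [Field F] [Ring R] [Algebra F R] [Group G]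

lemma mulCP_single_single (α : G → G → Rˣ) (η : G → R ≃ₐ[F] R) (x y : G) (r s : R) :
    mulCP F α η (Finsupp.single x r) (Finsupp.single y s)
      = Finsupp.single (x * y) (r * η x s * (α x y : R)) := by
  unfold mulCP
  rw [Finsupp.sum_single_index (by simp), Finsupp.sum_single_index (by simp)]

lemma mulCP_add_left (α : G → G → Rˣ) (η : G → R ≃ₐ[F] R) (a₁ a₂ b : G →₀ R) :
    mulCP F α η (a₁ + a₂) b = mulCP F α η a₁ b + mulCP F α η a₂ b := by
  unfold mulCP
  exact Finsupp.sum_add_index' (by simp)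
    (by intros; simp [add_mul, Finsupp.single_add, Finsupp.sum_add])

lemma mulCP_add_right (α : G → G → Rˣ) (η : G → R ≃ₐ[F] R) (a b₁ b₂ : G →₀ R) :
    mulCP F α η a (b₁ + b₂) = mulCP F α η a b₁ + mulCP F α η a b₂ := by
  unfold mulCP
  rw [← Finsupp.sum_add]
  refine Finsupp.sum_congr fun x _ => ?_
  exact Finsupp.sum_add_index' (by simp)
    (by intros; simp [mul_add, add_mul, Finsupp.single_add])

lemma mulCP_zero_left (α : G → G → Rˣ) (η : G → R ≃ₐ[F] R) (b : G →₀ R) :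
    mulCP F α η 0 b = 0 := by simp [mulCP]

lemma mulCP_zero_right (α : G → G → Rˣ) (η : G → R ≃ₐ[F] R) (a : G →₀ R) :
    mulCP F α η a 0 = 0 := by simp [mulCP]

lemma Compatible.eta_one {α : G → G → Rˣ} {η : G → R ≃ₐ[F] R} (h : Compatible F α η) (r : R) :
    η 1 r = (α 1 1 : R) * r * ((α 1 1)⁻¹ : Rˣ) := by
  have h2 := h.2 1 1 ((η 1).symm r)
  simpa using h2

lemma Compatible.alpha_one_left {α : G → G → Rˣ} {η : G → R ≃ₐ[F] R} (h : Compatible F α η)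
    (y : G) : α 1 y = α 1 1 := by
  have h1 := h.1 1 1 y
  rw [one_mul, one_mul, h.eta_one] at h1
  have h2 : α 1 1 * α 1 y = α 1 1 * α 1 y * ((α 1 1)⁻¹ * α 1 y) := by
    apply Units.ext
    push_cast
    rw [← mul_assoc]
    exact h1
  exact (inv_mul_eq_one.mp (left_eq_mul.mp h2)).symm

noncomputable def psiL (lam : G → Rˣ) (φ : R ≃ₐ[F] R) : (G →₀ R) →ₗ[F] (G →₀ R) :=
  Finsupp.lsum F fun g => (Finsupp.lsingle g) ∘ₗ
    (LinearMap.mulRight F ((↑(lam g)⁻¹ : R))) ∘ₗ φ.toLinearMap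

noncomputable def psiL' (lam : G → Rˣ) (φ : R ≃ₐ[F] R) : (G →₀ R) →ₗ[F] (G →₀ R) :=
  Finsupp.lsum F fun g => (Finsupp.lsingle g) ∘ₗ
    φ.symm.toLinearMap ∘ₗ (LinearMap.mulRight F ((lam g : R)))

lemma psiL_single (lam : G → Rˣ) (φ : R ≃ₐ[F] R) (g : G) (r : R) :
    psiL lam φ (Finsupp.single g r) = Finsupp.single g (φ r * ↑(lam g)⁻¹) := by
  simp [psiL]

lemma psiL'_single (lam : G → Rˣ) (φ : R ≃ₐ[F] R) (g : G) (r : R) :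
    psiL' lam φ (Finsupp.single g r) = Finsupp.single g (φ.symm (r * lam g)) := by
  simp [psiL']

lemma psiLL' (lam : G → Rˣ) (φ : R ≃ₐ[F] R) :
    (psiL lam φ) ∘ₗ (psiL' lam φ) = LinearMap.id := by
  refine Finsupp.lhom_ext fun g r => ?_
  rw [LinearMap.comp_apply, psiL'_single, psiL_single, AlgEquiv.apply_symm_apply,
    mul_assoc, Units.mul_inv, mul_one, LinearMap.id_apply]

lemma psiL'L (lam : G → Rˣ) (φ : R ≃ₐ[F] R) :
    (psiL' lam φ) ∘ₗ (psiL lam φ) = LinearMap.id := by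
  refine Finsupp.lhom_ext fun g r => ?_
  rw [LinearMap.comp_apply, psiL_single, psiL'_single, mul_assoc, Units.inv_mul, mul_one,
    AlgEquiv.symm_apply_apply, LinearMap.id_apply]

lemma key_rev (α₁ α₂ : G → G → Rˣ) (η₁ η₂ : G → R ≃ₐ[F] R) (lam : G → Rˣ) (φ : R ≃ₐ[F] R)
    (hB : ∀ (g : G) (r : R),
        η₂ g r = (lam g : R) * φ (η₁ g (φ.symm r)) * ((lam g)⁻¹ : Rˣ))
    (hA : ∀ g h : G,
        (α₂ g h : R) = (lam g : R) * φ (η₁ g (φ.symm (lam h))) * φ (α₁ g h) *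
            ((lam (g * h))⁻¹ : Rˣ)) (x y : G) (r s : R) :
    φ (r * η₁ x s * (α₁ x y : R)) * ((lam (x * y))⁻¹ : Rˣ)
      = (φ r * ((lam x)⁻¹ : Rˣ)) * η₂ x (φ s * ((lam y)⁻¹ : Rˣ)) * (α₂ x y : R) := by
  have h5 : ∀ z : R,
      φ (η₁ x (φ.symm ((lam y)⁻¹ : Rˣ))) * (φ (η₁ x (φ.symm (lam y))) * z) = z := by
    intro z
    rw [← mul_assoc, ← map_mul, ← map_mul, ← map_mul, Units.inv_mul]
    simp
  rw [map_mul (η₂ x), hB x (φ s), hB x (((lam y)⁻¹ : Rˣ) : R), hA x y,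
    AlgEquiv.symm_apply_apply, map_mul φ, map_mul φ]
  simp only [mul_assoc, Units.inv_mul_cancel_left]
  rw [h5]

lemma rev_mul_single (α₁ α₂ : G → G → Rˣ) (η₁ η₂ : G → R ≃ₐ[F] R) (lam : G → Rˣ)
    (φ : R ≃ₐ[F] R)
    (hB : ∀ (g : G) (r : R),
        η₂ g r = (lam g : R) * φ (η₁ g (φ.symm r)) * ((lam g)⁻¹ : Rˣ))
    (hA : ∀ g h : G,
        (α₂ g h : R) = (lam g : R) * φ (η₁ g (φ.symm (lam h))) * φ (α₁ g h) *
            ((lam (g * h))⁻¹ : Rˣ)) (x : G) (r : R) (b : G →₀ R) :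
    psiL lam φ (mulCP F α₁ η₁ (Finsupp.single x r) b)
      = mulCP F α₂ η₂ (psiL lam φ (Finsupp.single x r)) (psiL lam φ b) := by
  induction b using Finsupp.induction with
  | zero => simp [mulCP_zero_right]
  | single_add y s g _ _ ihb =>
    rw [mulCP_add_right, map_add, map_add, mulCP_add_right, ihb]
    congr 1
    rw [mulCP_single_single, psiL_single, psiL_single, psiL_single, mulCP_single_single,
      key_rev α₁ α₂ η₁ η₂ lam φ hB hA]

lemma rev_mul (α₁ α₂ : G → G → Rˣ) (η₁ η₂ : G → R ≃ₐ[F] R) (lam : G → Rˣ) (φ : R ≃ₐ[F] R)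
    (hB : ∀ (g : G) (r : R),
        η₂ g r = (lam g : R) * φ (η₁ g (φ.symm r)) * ((lam g)⁻¹ : Rˣ))
    (hA : ∀ g h : G,
        (α₂ g h : R) = (lam g : R) * φ (η₁ g (φ.symm (lam h))) * φ (α₁ g h) *
            ((lam (g * h))⁻¹ : Rˣ)) (a b : G →₀ R) :
    psiL lam φ (mulCP F α₁ η₁ a b) = mulCP F α₂ η₂ (psiL lam φ a) (psiL lam φ b) := by
  induction a using Finsupp.induction with
  | zero => simp [mulCP_zero_left]
  | single_add x r f _ _ ih =>
    rw [mulCP_add_left, map_add, map_add, mulCP_add_left, ih,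
      rev_mul_single α₁ α₂ η₁ η₂ lam φ hB hA]

end Aux

/-- Two crossed products `R^{α₁}_{η₁}G` and `R^{α₂}_{η₂}G` are graded isomorphic iff there
exist `λ : G → Rˣ` and `φ ∈ Aut_F(R)` such that `η₂(g) = ι_{λ(g)} ∘ φ ∘ η₁(g) ∘ φ⁻¹` and
`α₂(g,h) = λ(g) φ(η₁(g)(φ⁻¹(λ(h)))) φ(α₁(g,h)) λ(gh)⁻¹`. -/
theorem stmt_9 {F R G : Type*} [Field F] [Ring R] [Algebra F R] [Group G]
    (α₁ α₂ : G → G → Rˣ) (η₁ η₂ : G → R ≃ₐ[F] R)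
    (h₁ : Compatible F α₁ η₁) (h₂ : Compatible F α₂ η₂) :
    (∃ ψ : (G →₀ R) ≃ₗ[F] (G →₀ R),
        (∀ a b : G →₀ R, ψ (mulCP F α₁ η₁ a b) = mulCP F α₂ η₂ (ψ a) (ψ b)) ∧
        (∀ (g : G) (r : R), ∃ s : R, ψ (Finsupp.single g r) = Finsupp.single g s)) ↔
    ∃ (lam : G → Rˣ) (φ : R ≃ₐ[F] R),
      (∀ (g : G) (r : R),
        η₂ g r = (lam g : R) * φ (η₁ g (φ.symm r)) * ((lam g)⁻¹ : Rˣ)) ∧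
      (∀ g h : G,
        (α₂ g h : R) =
          (lam g : R) * φ (η₁ g (φ.symm (lam h))) * φ (α₁ g h) *
            ((lam (g * h))⁻¹ : Rˣ)) := by
  constructor
  · rintro ⟨ψ, hmul, hgr⟩
    classical
    set T : G → R → R := fun g r => ψ (Finsupp.single g r) g with hTdef
    have hT : ∀ g r, ψ (Finsupp.single g r) = Finsupp.single g (T g r) := by
      intro g r
      obtain ⟨s, hs⟩ := hgr g r
      rw [hs]
      congr 1
      show s = ψ (Finsupp.single g r) g
      rw [hs, Finsupp.single_eq_same]
    have hT0 : ∀ g, T g 0 = 0 := by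
      intro g
      show ψ (Finsupp.single g 0) g = 0
      simp
    have hTadd : ∀ g r₁ r₂, T g (r₁ + r₂) = T g r₁ + T g r₂ := by
      intro g r₁ r₂
      show ψ (Finsupp.single g (r₁ + r₂)) g = _
      rw [Finsupp.single_add, map_add, Finsupp.add_apply]
    have hTsmul : ∀ g (f : F) (r : R), T g (f • r) = f • T g r := by
      intro g f r
      show ψ (Finsupp.single g (f • r)) g = _
      rw [← Finsupp.smul_single, map_smul, Finsupp.smul_apply]
    have hTinj : ∀ g, Function.Injective (T g) := by
      intro g r₁ r₂ h
      have h1 : ψ (Finsupp.single g r₁) = ψ (Finsupp.single g r₂) := by rw [hT, hT, h]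
      exact Finsupp.single_injective g (ψ.injective h1)
    have hpsi : ∀ a : G →₀ R, ψ a = a.sum fun g r => Finsupp.single g (T g r) := by
      intro a
      induction a using Finsupp.induction with
      | zero => simp
      | single_add g b f hgf hb ih =>
        rw [map_add, hT, ih,
          Finsupp.sum_add_index' (fun x => by rw [hT0, Finsupp.single_zero])
            (fun x r₁ r₂ => by rw [hTadd, Finsupp.single_add]),
          Finsupp.sum_single_index (by rw [hT0, Finsupp.single_zero])]
    have hTsurj : ∀ g, Function.Surjective (T g) := by
      intro g s
      refine ⟨ψ.symm (Finsupp.single g s) g, ?_⟩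
      have h1 : ψ (ψ.symm (Finsupp.single g s)) = Finsupp.single g s :=
        ψ.apply_symm_apply _
      rw [hpsi] at h1
      have h2 := DFunLike.congr_fun h1 g
      rw [Finsupp.sum_apply, Finsupp.single_eq_same] at h2
      simp only [Finsupp.single_apply] at h2
      rw [Finsupp.sum_ite_eq'] at h2
      by_cases hg : g ∈ (ψ.symm (Finsupp.single g s)).support
      · rw [if_pos hg] at h2
        exact h2
      · rw [if_neg hg] at h2
        rw [Finsupp.notMem_support_iff.mp hg, hT0]
        exact h2
    have star : ∀ (x y : G) (r s : R),
        T (x * y) (r * η₁ x s * (α₁ x y : R)) = T x r * η₂ x (T y s) * (α₂ x y : R) := by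
      intro x y r s
      have h := hmul (Finsupp.single x r) (Finsupp.single y s)
      rw [mulCP_single_single, hT, hT, hT, mulCP_single_single] at h
      exact Finsupp.single_injective (x * y) h
    have he₁ := h₁.eta_one
    have he₂ := h₂.eta_one
    have ha₁ := h₁.alpha_one_left
    have ha₂ := h₂.alpha_one_left
    set φ₀ : R → R := fun r => T 1 (r * ((α₁ 1 1)⁻¹ : Rˣ)) * (α₂ 1 1 : R) with hφ₀def
    have hC : ∀ (y : G) (r s : R), T y (r * s) = φ₀ r * T y s := by
      intro y r s
      have h := star 1 y (r * ((α₁ 1 1)⁻¹ : Rˣ)) s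
      rw [one_mul, ha₁ y, ha₂ y, he₁, he₂] at h
      have e1 : r * ((α₁ 1 1)⁻¹ : Rˣ) * ((α₁ 1 1 : R) * s * ((α₁ 1 1)⁻¹ : Rˣ)) *
          (α₁ 1 1 : R) = r * s := by
        simp [mul_assoc, Units.inv_mul_cancel_left]
      have e2 : T 1 (r * ((α₁ 1 1)⁻¹ : Rˣ)) * ((α₂ 1 1 : R) * T y s * ((α₂ 1 1)⁻¹ : Rˣ)) *
          (α₂ 1 1 : R) = φ₀ r * T y s := by
        rw [hφ₀def]
        simp [mul_assoc, Units.inv_mul_cancel_left]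
      rw [e1, e2] at h
      exact h
    have hφmul : ∀ r s : R, φ₀ (r * s) = φ₀ r * φ₀ s := by
      intro r s
      have : φ₀ (r * s) = T 1 (r * (s * ((α₁ 1 1)⁻¹ : Rˣ))) * (α₂ 1 1 : R) := by
        rw [hφ₀def]
        simp [mul_assoc]
      rw [this, hC 1 r (s * ((α₁ 1 1)⁻¹ : Rˣ)), mul_assoc]
    have hφone : φ₀ 1 = 1 := by
      obtain ⟨r0, hr0⟩ := hTsurj 1 1
      have h := hC 1 1 r0
      rw [one_mul, hr0, mul_one] at h
      exact h.symm
    have hφ0 : φ₀ 0 = 0 := by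
      rw [hφ₀def]
      simp only [zero_mul, hT0, zero_mul]
    have hφadd : ∀ r s : R, φ₀ (r + s) = φ₀ r + φ₀ s := by
      intro r s
      rw [hφ₀def]
      simp only [add_mul, hTadd]
    have hφsmul : ∀ (f : F) (r : R), φ₀ (f • r) = f • φ₀ r := by
      intro f r
      rw [hφ₀def]
      simp only [smul_mul_assoc, hTsmul]
    have hφinj : Function.Injective φ₀ := by
      intro r s h
      rw [hφ₀def] at h
      have h2 : T 1 (r * ((α₁ 1 1)⁻¹ : Rˣ)) = T 1 (s * ((α₁ 1 1)⁻¹ : Rˣ)) :=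
        (Units.mul_left_inj _).mp h
      have h3 := hTinj 1 h2
      exact (Units.mul_left_inj _).mp h3
    have hφsurj : Function.Surjective φ₀ := by
      intro t
      obtain ⟨r, hr⟩ := hTsurj 1 (t * ((α₂ 1 1)⁻¹ : Rˣ))
      refine ⟨r * (α₁ 1 1 : R), ?_⟩
      rw [hφ₀def]
      simp only
      rw [Units.mul_inv_cancel_right, hr, Units.inv_mul_cancel_right]
    let φRing : R →+* R :=
      { toFun := φ₀, map_one' := hφone, map_mul' := hφmul, map_zero' := hφ0,
        map_add' := hφadd }
    let φAlg : R →ₐ[F] R :=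
      { φRing with
        commutes' := fun f => by
          show φ₀ (algebraMap F R f) = algebraMap F R f
          rw [Algebra.algebraMap_eq_smul_one, hφsmul, hφone] }
    let φ : R ≃ₐ[F] R := AlgEquiv.ofBijective φAlg ⟨hφinj, hφsurj⟩
    have hφcoe : ∀ r, φ r = φ₀ r := fun r => rfl
    have hTc : ∀ g r, T g r = φ₀ r * T g 1 := by
      intro g r
      have h := hC g r 1
      rwa [mul_one] at h
    have hcu : ∀ g : G, ∃ u : Rˣ, (u : R) = T g 1 := by
      intro g
      obtain ⟨r, hr⟩ := hTsurj g 1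
      have hl : φ₀ r * T g 1 = 1 := by rw [← hTc g r, hr]
      have hinj' : ∀ x y : R, x * T g 1 = y * T g 1 → x = y := by
        intro x y hxy
        obtain ⟨x', hx'⟩ := hφsurj x
        obtain ⟨y', hy'⟩ := hφsurj y
        rw [← hx', ← hy', ← hTc, ← hTc] at hxy
        rw [← hx', ← hy', hTinj g hxy]
      have hr3 : T g 1 * φ₀ r = 1 := by
        apply hinj'
        rw [mul_assoc, hl, mul_one, one_mul]
      exact ⟨⟨T g 1, φ₀ r, hr3, hl⟩, rfl⟩
    choose cu hcuv using hcu
    have starC : ∀ (x y : G) (r s : R),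
        φ₀ (r * η₁ x s * (α₁ x y : R)) * (cu (x * y) : R)
          = (φ₀ r * (cu x : R)) * η₂ x (φ₀ s * (cu y : R)) * (α₂ x y : R) := by
      intro x y r s
      have h := star x y r s
      rw [hTc (x * y), hTc x, hTc y, ← hcuv, ← hcuv, ← hcuv] at h
      exact h
    have hA0 : ∀ x y : G,
        φ₀ (α₁ x y : R) * (cu (x * y) : R)
          = (cu x : R) * η₂ x (cu y : R) * (α₂ x y : R) := by
      intro x y
      have h := starC x y 1 1
      simp only [map_one, one_mul, hφone, mul_one] at h
      exact h
    have hB0 : ∀ (x : G) (s : R),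
        φ₀ (η₁ x s) * (cu x : R) = (cu x : R) * η₂ x (φ₀ s) := by
      intro x s
      have h := starC x 1 1 s
      simp only [one_mul, hφone, mul_one] at h
      rw [hφmul, map_mul (η₂ x)] at h
      have hA1 := hA0 x 1
      rw [mul_one] at hA1
      rw [mul_assoc, hA1] at h
      simp only [← mul_assoc] at h
      have h' := (Units.mul_left_inj (α₂ x 1)).mp h
      obtain ⟨v, hv⟩ : ∃ v : Rˣ, (v : R) = η₂ x (cu 1 : R) :=
        ⟨Units.map ((η₂ x).toAlgHom.toRingHom.toMonoidHom) (cu 1), rfl⟩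
      rw [← hv] at h'
      exact (Units.mul_left_inj v).mp h'
    refine ⟨fun g => (cu g)⁻¹, φ, ?_, ?_⟩
    · intro g r
      simp only [inv_inv]
      have hr : φ₀ (φ.symm r) = r := by
        rw [← hφcoe]
        exact φ.apply_symm_apply r
      have h := hB0 g (φ.symm r)
      rw [hr] at h
      rw [hφcoe]
      calc η₂ g r = ((cu g)⁻¹ : Rˣ) * ((cu g : R) * η₂ g r) :=
            (Units.inv_mul_cancel_left _ _).symm
        _ = ((cu g)⁻¹ : Rˣ) * (φ₀ (η₁ g (φ.symm r)) * (cu g : R)) := by rw [h]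
        _ = ((cu g)⁻¹ : Rˣ) * φ₀ (η₁ g (φ.symm r)) * (cu g : R) := (mul_assoc _ _ _).symm
    · intro x y
      simp only [inv_inv]
      have ht : φ₀ (φ.symm (((cu y)⁻¹ : Rˣ) : R)) = (((cu y)⁻¹ : Rˣ) : R) := by
        rw [← hφcoe]
        exact φ.apply_symm_apply _
      have h := hB0 x (φ.symm (((cu y)⁻¹ : Rˣ) : R))
      rw [ht] at h
      rw [hφcoe, hφcoe]
      have hphieq : φ₀ (η₁ x (φ.symm (((cu y)⁻¹ : Rˣ) : R)))
          = (cu x : R) * η₂ x (((cu y)⁻¹ : Rˣ) : R) * ((cu x)⁻¹ : Rˣ) := by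
        rw [Units.eq_mul_inv_iff_mul_eq]
        exact h
      have hinv : η₂ x (((cu y)⁻¹ : Rˣ) : R) * η₂ x (cu y : R) = 1 := by
        rw [← map_mul, Units.inv_mul, map_one]
      symm
      rw [hphieq]
      simp only [mul_assoc]
      rw [hA0 x y]
      simp only [mul_assoc, Units.inv_mul_cancel_left]
      rw [← mul_assoc, hinv, one_mul]
  · rintro ⟨lam, φ, hB, hA⟩
    refine ⟨LinearEquiv.ofLinear (psiL lam φ) (psiL' lam φ) (psiLL' lam φ) (psiL'L lam φ),
      ?_, ?_⟩
    · intro a b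
      simpa [LinearEquiv.ofLinear_apply] using rev_mul α₁ α₂ η₁ η₂ lam φ hB hA a b
    · intro g r
      exact ⟨φ r * ↑(lam g)⁻¹, by
        simp only [LinearEquiv.ofLinear_apply]
        exact psiL_single lam φ g r⟩
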